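/- Let n ≥ 2, a > 0, C ≥ 0, and let p, F : (0, a] → ℝ be continuous with |p(r)| ≤ C and |F(r)| ≤ C·r for all r ∈ (0, a]. Set P(r) := ∫_{a}^{r} p(s) ds and define ξ(r) := (2·e^{−P(r)}/r^{n−1}) · ∫_{0}^{r} s^{n−1}·e^{P(s)}·F(s) ds. Then there exists C′ ≥ 0 such that |ξ(r)| ≤ C′·r² for all r ∈ (0, a]. -/
import Mathlib


open Set

/-- With `|p| ≤ C` and `|F(r)| ≤ C·r`, the explicit solution
`ξ(r) = (2e^{−P(r)}/r^{n−1})·∫_0^r s^{n−1}e^{P(s)}F(s) ds` of the `ξ`-constraint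
satisfies `|ξ(r)| ≤ C′·r²` on `(0,a]`. -/
theorem xi_vanishes_quadratically_at_vertex (n : ℕ) (hn : 2 ≤ n)
    (a C : ℝ) (ha : 0 < a) (hC : 0 ≤ C)
    (p F : ℝ → ℝ)
    (hpc : ContinuousOn p (Ioc 0 a)) (hFc : ContinuousOn F (Ioc 0 a))
    (hpb : ∀ r ∈ Ioc 0 a, |p r| ≤ C)
    (hFb : ∀ r ∈ Ioc 0 a, |F r| ≤ C * r)
    (P : ℝ → ℝ) (hP : ∀ r, P r = ∫ s in a..r, p s)
    (ξ : ℝ → ℝ)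
    (hξ : ∀ r, ξ r = (2 * Real.exp (-(P r)) / r^(n-1)) *
      ∫ s in (0:ℝ)..r, s^(n-1) * Real.exp (P s) * F s) :
    ∃ C' : ℝ, 0 ≤ C' ∧ ∀ r ∈ Ioc 0 a, |ξ r| ≤ C' * r^2 := by

  obtain ⟨m, rfl⟩ : ∃ m, n = m + 2 := ⟨n - 2, by omega⟩
  have hm : m + 2 - 1 = m + 1 := by omega
  set E := Real.exp (C * a) with hE
  have hE1 : 1 ≤ E := Real.one_le_exp (by positivity)
  refine ⟨2 * C * E * E, by positivity, ?_⟩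
  intro r hr
  obtain ⟨hr0, hra⟩ := hr
  -- bound on P on (0, a]
  have hPb : ∀ s ∈ Ioc (0:ℝ) a, |P s| ≤ C * a := by
    intro s hs
    rw [hP]
    have h1 : ‖∫ x in a..s, p x‖ ≤ C * |s - a| :=
      intervalIntegral.norm_integral_le_of_norm_le_const (by
        intro x hx
        rcases Set.mem_uIoc.mp hx with ⟨hx1, hx2⟩ | ⟨hx1, hx2⟩
        · exact hpb x ⟨ha.trans hx1, hx2.trans hs.2⟩
        · exact hpb x ⟨hs.1.trans hx1, hx2⟩)
    rw [Real.norm_eq_abs] at h1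
    refine h1.trans ?_
    have : |s - a| ≤ a := by
      rw [abs_sub_comm, abs_of_nonneg (by linarith [hs.2])]
      linarith [hs.1]
    nlinarith
  -- bound on the inner integral
  have key : |∫ s in (0:ℝ)..r, s ^ (m + 2 - 1) * Real.exp (P s) * F s|
      ≤ C * E * r ^ (m + 2) * |r - 0| := by
    rw [← Real.norm_eq_abs]
    apply intervalIntegral.norm_integral_le_of_norm_le_const
    intro x hx
    have hx' : x ∈ Ioc (0:ℝ) r := by
      rcases Set.mem_uIoc.mp hx with h | h
      · exact h
      · exact absurd h.2 (not_le.mpr (hr0.trans h.1))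
    have hx0 : 0 < x := hx'.1
    have hxr : x ≤ r := hx'.2
    have hxa : x ∈ Ioc (0:ℝ) a := ⟨hx0, hxr.trans hra⟩
    have h2 : Real.exp (P x) ≤ E :=
      Real.exp_le_exp.mpr ((le_abs_self _).trans (hPb x hxa))
    have h3 : |F x| ≤ C * r := (hFb x hxa).trans (by nlinarith)
    have hnorm : ‖x ^ (m + 2 - 1) * Real.exp (P x) * F x‖
        = x ^ (m + 1) * Real.exp (P x) * |F x| := by
      rw [Real.norm_eq_abs, abs_mul, abs_mul, hm,
        abs_of_pos (Real.exp_pos _), abs_of_pos (by positivity : (0:ℝ) < x ^ (m + 1))]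
    rw [hnorm]
    have h1 : x ^ (m + 1) ≤ r ^ (m + 1) := pow_le_pow_left₀ hx0.le hxr _
    calc x ^ (m + 1) * Real.exp (P x) * |F x| ≤ r ^ (m + 1) * E * (C * r) := by
          apply mul_le_mul (mul_le_mul h1 h2 (Real.exp_pos _).le (by positivity)) h3
            (abs_nonneg _) (by positivity)
      _ = C * E * r ^ (m + 2) := by ring
  have hrabs : |r - 0| = r := by rw [sub_zero, abs_of_pos hr0]
  rw [hrabs] at key
  have hePr : Real.exp (-(P r)) ≤ E := by
    apply Real.exp_le_exp.mpr
    have := hPb r ⟨hr0, hra⟩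
    calc -(P r) ≤ |P r| := neg_le_abs _
      _ ≤ C * a := this
  rw [hξ r, abs_mul,
    abs_of_pos (by positivity : (0:ℝ) < 2 * Real.exp (-(P r)) / r ^ (m + 2 - 1)), hm]
  have hrne : r ≠ 0 := hr0.ne'
  calc 2 * Real.exp (-(P r)) / r ^ (m + 1) *
        |∫ s in (0:ℝ)..r, s ^ (m + 2 - 1) * Real.exp (P s) * F s|
      ≤ 2 * E / r ^ (m + 1) * (C * E * r ^ (m + 2) * r) := by
        apply mul_le_mul _ key (abs_nonneg _) (by positivity)
        apply div_le_div_of_nonneg_right _ (by positivity)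
        · linarith
    _ = 2 * C * E * E * r ^ 2 := by field_simp; ring
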